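/- Dynamic programming with unit time blocks and independent noises (finite state case): let W_1,...,W_T be independent random variables with values in finite sets, X_0,...,X_T finite state spaces, f_t : X_t × U_t × W_{t+1} → X_{t+1} dynamics with finite control sets U_t, and j̃ : X_T → [0,∞]. Define Ṽ_T = j̃ and Ṽ_t(x) = inf_{u ∈ U_t} E[ Ṽ_{t+1}(f_t(x, u, W_{t+1})) ]. Then for every t and x_t ∈ X_t, Ṽ_t(x_t) equals the infimum over adapted control processes (U_t,...,U_{T-1}) (with σ(U_s) ⊆ σ(W_{t+1},...,W_s)) of E[ j̃(X_T) ], where X_t = x_t and X_{s+1} = f_s(X_s, U_s, W_{s+1}). -/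

import Mathlib

open scoped ENNReal
open Classical
set_option linter.unusedSectionVars false

/-- Transport of a state along an equality of time indices. -/
def xcast {X : ℕ → Type} {a b : ℕ} (e : a = b) (x : X a) : X b := e ▸ x

/-- The backward dynamic programming value functions
`Ṽ_{t+n} = K`, `Ṽ_t(x) = inf_{u ∈ U_t} E[ Ṽ_{t+1}(f_t(x,u,W_{t+1})) ]`. -/
noncomputable def Vtil {Wn U X : ℕ → Type} {Ω : Type}
    (P : Ω → ℝ≥0∞) (Wp : ∀ s, Ω → Wn s)
    (f : ∀ s, X s → U s → Wn (s + 1) → X (s + 1)) :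
    ∀ (n t : ℕ), (X (t + n) → ℝ≥0∞) → X t → ℝ≥0∞
  | 0, _, K, x => K x
  | n + 1, t, K, x =>
      ⨅ u : U t, ∑' ω : Ω,
        Vtil P Wp f n (t + 1) (fun x' => K (xcast (by omega) x'))
          (f t x u (Wp (t + 1) ω)) * P ω


theorem xcast_xcast {X : ℕ → Type} {a b c : ℕ} (e : a = b) (e' : b = c) (x : X a) :
    xcast e' (xcast e x) = xcast (e.trans e') x := by subst e e'; rfl

theorem xcast_heq {X : ℕ → Type} {a b : ℕ} (e : a = b) (x : X a) : HEq (xcast e x) x := by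
  subst e; rfl

theorem xcast_rfl {X : ℕ → Type} {a : ℕ} (e : a = a) (x : X a) : xcast e x = x := rfl

/-- The random state trajectory `X_t = x`, `X_{s+1} = f_s(X_s, U_s, W_{s+1})` driven by a
control process `Up` and the noises. -/
def traj {Wn U X : ℕ → Type} {Ω : Type}
    (f : ∀ s, X s → U s → Wn (s + 1) → X (s + 1))
    (Up : ∀ s, Ω → U s) (Wp : ∀ s, Ω → Wn s) :
    ∀ (n t : ℕ), X t → Ω → X (t + n)
  | 0, _, x, _ => x
  | n + 1, t, x, ω => f (t + n) (traj f Up Wp n t x ω) (Up (t + n) ω) (Wp (t + n + 1) ω)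

section Traj
variable {Wn U X : ℕ → Type} {Ω : Type}
    (f : ∀ s, X s → U s → Wn (s + 1) → X (s + 1))
    (Up Up' : ∀ s, Ω → U s) (Wp : ∀ s, Ω → Wn s)

theorem traj_shift : ∀ (n t : ℕ) (x : X t) (ω : Ω),
    traj f Up Wp (n + 1) t x ω
      = xcast (by omega) (traj f Up Wp n (t + 1) (f t x (Up t ω) (Wp (t + 1) ω)) ω) := by
  intro n
  induction n with
  | zero => intro t x ω; rfl
  | succ n ih =>
    intro t x ω
    show f (t + (n+1)) (traj f Up Wp (n+1) t x ω) (Up (t + (n+1)) ω) (Wp (t + (n+1) + 1) ω) = _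
    rw [ih t x ω]
    apply eq_of_heq
    have h1 : t + 1 + n = t + n + 1 := by omega
    refine HEq.trans ?_ (xcast_heq _ _).symm
    show HEq (f (t + n + 1) (xcast (by omega) (traj f Up Wp n (t+1) _ ω)) (Up (t + n + 1) ω)
        (Wp (t + n + 1 + 1) ω))
      (f (t + 1 + n) (traj f Up Wp n (t+1) _ ω) (Up (t + 1 + n) ω) (Wp (t + 1 + n + 1) ω))
    congr 1 <;> first
      | omega
      | exact xcast_heq _ _
      | rw [h1]

theorem traj_congr_ctrl : ∀ (n t : ℕ) (x : X t) (ω : Ω),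
    (∀ s, t ≤ s → s < t + n → Up s ω = Up' s ω) →
    traj f Up Wp n t x ω = traj f Up' Wp n t x ω := by
  intro n
  induction n with
  | zero => intro t x ω _; rfl
  | succ n ih =>
    intro t x ω h
    show f (t + n) (traj f Up Wp n t x ω) (Up (t + n) ω) (Wp (t + n + 1) ω) = _
    rw [ih t x ω (fun s hs hs' => h s hs (by omega)), h (t + n) (by omega) (by omega)]
    rfl

theorem traj_meas (t0 : ℕ)
    (hUp : ∀ (s : ℕ) (ω ω' : Ω), (∀ r, t0 < r → r ≤ s → Wp r ω = Wp r ω') → Up s ω = Up s ω') :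
    ∀ (n t : ℕ), t0 ≤ t → ∀ (x : X t) (ω ω' : Ω),
    (∀ r, t0 < r → r ≤ t + n → Wp r ω = Wp r ω') →
    traj f Up Wp n t x ω = traj f Up Wp n t x ω' := by
  intro n
  induction n with
  | zero => intro t _ x ω ω' _; rfl
  | succ n ih =>
    intro t ht x ω ω' h
    show f (t + n) (traj f Up Wp n t x ω) (Up (t + n) ω) (Wp (t + n + 1) ω) = _
    rw [ih t ht x ω ω' (fun r hr hr' => h r hr (by omega)),
      hUp (t + n) ω ω' (fun r hr hr' => h r (by omega) (by omega)),
      h (t + n + 1) (by omega) (by omega)]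
    rfl

end Traj

section Meas
variable {Ω : Type} [Fintype Ω] [Nonempty Ω]

omit [Nonempty Ω] in
theorem fiber_sum {κ : Type} [Fintype κ] [DecidableEq κ] (key : Ω → κ) (F : Ω → ℝ≥0∞) :
    ∑ ω : Ω, F ω = ∑ k : κ, ∑ ω : Ω, if key ω = k then F ω else 0 := by
  rw [Finset.sum_comm]
  refine Finset.sum_congr rfl fun ω _ => ?_
  simp

variable {Wn : ℕ → Type} [∀ s, Fintype (Wn s)] [∀ s, Nonempty (Wn s)]

noncomputable def margin (P : Ω → ℝ≥0∞) (Wp : ∀ s, Ω → Wn s) (s : ℕ) (w : Wn s) : ℝ≥0∞ :=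
  ∑ ω : Ω, if Wp s ω = w then P ω else 0

theorem margin_sum (P : Ω → ℝ≥0∞) (Wp : ∀ s, Ω → Wn s) (s : ℕ) :
    ∑ w : Wn s, margin P Wp s w = ∑ ω : Ω, P ω := by
  unfold margin
  rw [Finset.sum_comm]
  refine Finset.sum_congr rfl fun ω _ => ?_
  simp

theorem sum_w (P : Ω → ℝ≥0∞) (Wp : ∀ s, Ω → Wn s) (s : ℕ) (F : Wn s → ℝ≥0∞) :
    ∑ ω : Ω, F (Wp s ω) * P ω = ∑ w : Wn s, F w * margin P Wp s w := by
  rw [fiber_sum (Wp s) (fun ω => F (Wp s ω) * P ω)]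
  refine Finset.sum_congr rfl fun w _ => ?_
  rw [margin, Finset.mul_sum]
  refine Finset.sum_congr rfl fun ω _ => ?_
  by_cases h : Wp s ω = w <;> simp [h]

end Meas

section PiAlg
variable {T : ℕ} {B : Fin T → Type} [∀ r, Fintype (B r)]

theorem cell_shift (h : (∀ r, B r) → ℝ≥0∞) (t0 : Fin T)
    (hh : ∀ v (a : B t0), h (Function.update v t0 a) = h v) (a w : B t0) :
    ∑ v : ∀ r, B r, (if v t0 = a then h v else 0)
      = ∑ v : ∀ r, B r, (if v t0 = w then h v else 0) := by
  rw [← Finset.sum_filter, ← Finset.sum_filter]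
  refine Finset.sum_nbij' (fun v => Function.update v t0 w)
    (fun v => Function.update v t0 a) ?_ ?_ ?_ ?_ ?_
  · intro v hv
    simp [Function.update_self]
  · intro v hv
    simp [Function.update_self]
  · intro v hv
    simp only [Finset.mem_filter] at hv
    show Function.update (Function.update v t0 w) t0 a = v
    rw [Function.update_idem, ← hv.2, Function.update_eq_self]
  · intro v hv
    simp only [Finset.mem_filter] at hv
    show Function.update (Function.update v t0 a) t0 w = v
    rw [Function.update_idem, ← hv.2, Function.update_eq_self]
  · intro v hv
    exact (hh v w).symm

theorem split_at (h : (∀ r, B r) → ℝ≥0∞) (t0 : Fin T)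
    (hh : ∀ v (a : B t0), h (Function.update v t0 a) = h v)
    (c : B t0 → ℝ≥0∞) (w : B t0) :
    ∑ v : ∀ r, B r, c (v t0) * h v
      = (∑ a : B t0, c a) * ∑ v : ∀ r, B r, (if v t0 = w then h v else 0) := by
  rw [fiber_sum (fun v : ∀ r, B r => v t0) (fun v => c (v t0) * h v), Finset.sum_mul]
  refine Finset.sum_congr rfl fun a _ => ?_
  rw [← cell_shift h t0 hh a w, Finset.mul_sum]
  refine Finset.sum_congr rfl fun v _ => ?_
  by_cases hv : v t0 = a <;> simp [hv]

theorem sum_pi_ite (m : ∀ r, B r → ℝ≥0∞) (G : (∀ r, B r) → ℝ≥0∞) (t0 : Fin T) (w : B t0)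
    (hm : ∑ a : B t0, m t0 a = 1)
    (hG : ∀ v (a : B t0), G (Function.update v t0 a) = G v) :
    ∑ v : ∀ r, B r, (if v t0 = w then G v * ∏ r, m r (v r) else 0)
      = m t0 w * ∑ v : ∀ r, B r, G v * ∏ r, m r (v r) := by
  have hsplit : ∀ v : ∀ r, B r, ∏ r, m r (v r) = m t0 (v t0) * ∏ r ∈ Finset.univ.erase t0, m r (v r) :=
    fun v => (Finset.mul_prod_erase Finset.univ (fun r => m r (v r)) (Finset.mem_univ t0)).symm
  set h : (∀ r, B r) → ℝ≥0∞ := fun v => G v * ∏ r ∈ Finset.univ.erase t0, m r (v r) with hdef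
  have hh : ∀ v (a : B t0), h (Function.update v t0 a) = h v := by
    intro v a
    simp only [hdef]
    rw [hG]
    congr 1
    refine Finset.prod_congr rfl fun r hr => ?_
    rw [Function.update_of_ne (Finset.ne_of_mem_erase hr)]
  have key : ∀ a : B t0, ∑ v : ∀ r, B r, (if v t0 = a then G v * ∏ r, m r (v r) else 0)
      = m t0 a * ∑ v : ∀ r, B r, (if v t0 = w then h v else 0) := by
    intro a
    have : ∀ v : ∀ r, B r, (if v t0 = a then G v * ∏ r, m r (v r) else 0)
        = m t0 a * (if v t0 = a then h v else 0) := by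
      intro v
      by_cases hv : v t0 = a
      · rw [if_pos hv, if_pos hv, hsplit, hv, hdef]; ring
      · simp [hv]
    rw [Finset.sum_congr rfl fun v _ => this v, ← Finset.mul_sum,
      cell_shift h t0 hh a w]
  rw [key w]
  congr 1
  symm
  calc ∑ v : ∀ r, B r, G v * ∏ r, m r (v r)
      = ∑ v : ∀ r, B r, m t0 (v t0) * h v := by
        refine Finset.sum_congr rfl fun v _ => ?_
        rw [hsplit, hdef]; ring
    _ = (∑ a : B t0, m t0 a) * ∑ v : ∀ r, B r, (if v t0 = w then h v else 0) :=
        split_at h t0 hh (m t0) w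
    _ = ∑ v : ∀ r, B r, (if v t0 = w then h v else 0) := by rw [hm, one_mul]

end PiAlg

section Indep
variable {Ω : Type} [Fintype Ω] [Nonempty Ω]
variable {Wn : ℕ → Type} [∀ s, Fintype (Wn s)] [∀ s, Nonempty (Wn s)]

noncomputable def wext (T : ℕ) (v : ∀ r : Fin T, Wn (r + 1)) : ∀ s, Wn s
  | 0 => Classical.arbitrary _
  | (k+1) => if h : k < T then v ⟨k, h⟩ else Classical.arbitrary _

theorem wext_succ (T : ℕ) (v : ∀ r : Fin T, Wn (r + 1)) (k : ℕ) (h : k < T) :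
    wext T v (k+1) = v ⟨k, h⟩ := by
  simp [wext, h]

theorem cell_measure (P : Ω → ℝ≥0∞) (Wp : ∀ s, Ω → Wn s) (T : ℕ)
    (hind : ∀ w : ∀ s, Wn s,
      (∑ ω : Ω, if (∀ s, 1 ≤ s → s ≤ T → Wp s ω = w s) then P ω else 0)
        = ∏ s ∈ Finset.Icc 1 T, margin P Wp s (w s))
    (v : ∀ r : Fin T, Wn (r + 1)) :
    (∑ ω : Ω, if (fun r : Fin T => Wp (r + 1) ω) = v then P ω else 0)
      = ∏ r : Fin T, margin P Wp (r + 1) (v r) := by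
  have hiff : ∀ ω : Ω, ((fun r : Fin T => Wp (r + 1) ω) = v)
      ↔ (∀ s, 1 ≤ s → s ≤ T → Wp s ω = wext T v s) := by
    intro ω
    constructor
    · intro h s hs1 hsT
      obtain ⟨k, rfl⟩ : ∃ k, s = k + 1 := ⟨s - 1, by omega⟩
      have hk : k < T := by omega
      rw [wext_succ T v k hk, ← congrFun h ⟨k, hk⟩]
    · intro h
      funext r
      have hh := h ((r : ℕ) + 1) (by omega) (by omega)
      rw [wext_succ T v r r.isLt] at hh
      exact hh
  have step1 : (∑ ω : Ω, if (fun r : Fin T => Wp (r + 1) ω) = v then P ω else 0)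
      = ∑ ω : Ω, if (∀ s, 1 ≤ s → s ≤ T → Wp s ω = wext T v s) then P ω else 0 := by
    refine Finset.sum_congr rfl fun ω _ => ?_
    by_cases h : (fun r : Fin T => Wp (r + 1) ω) = v
    · rw [if_pos h, if_pos ((hiff ω).mp h)]
    · rw [if_neg h, if_neg (fun hh => h ((hiff ω).mpr hh))]
  rw [step1, hind (wext T v)]
  refine (Finset.prod_bij' (fun (r : Fin T) _ => (r : ℕ) + 1)
    (fun s hs => (⟨s - 1, by simp only [Finset.mem_Icc] at hs; omega⟩ : Fin T)) ?_ ?_ ?_ ?_ ?_).symm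
  · intro r _
    simp only [Finset.mem_Icc]; omega
  · intro s hs
    exact Finset.mem_univ _
  · intro r _
    simp
  · intro s hs
    simp only [Finset.mem_Icc] at hs
    show s - 1 + 1 = s
    omega
  · intro r _
    rw [wext_succ T v r r.isLt]

theorem indep_split (P : Ω → ℝ≥0∞) (Wp : ∀ s, Ω → Wn s) (T : ℕ)
    (hP : ∑ ω : Ω, P ω = 1)
    (hind : ∀ w : ∀ s, Wn s,
      (∑ ω : Ω, if (∀ s, 1 ≤ s → s ≤ T → Wp s ω = w s) then P ω else 0)
        = ∏ s ∈ Finset.Icc 1 T, margin P Wp s (w s))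
    (t : ℕ) (htT : t < T) (g : Ω → ℝ≥0∞)
    (hg : ∀ ω ω', (∀ r, t + 1 < r → r ≤ T → Wp r ω = Wp r ω') → g ω = g ω')
    (w : Wn (t + 1)) :
    ∑ ω : Ω, (if Wp (t + 1) ω = w then g ω * P ω else 0)
      = margin P Wp (t + 1) w * ∑ ω : Ω, g ω * P ω := by
  set ext : Ω → ∀ r : Fin T, Wn ((r : ℕ) + 1) := fun ω r => Wp ((r : ℕ) + 1) ω with hext
  set G : (∀ r : Fin T, Wn ((r : ℕ) + 1)) → ℝ≥0∞ := fun v =>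
    if h : ∃ ω : Ω, ∀ r : Fin T, t < (r : ℕ) → Wp ((r : ℕ) + 1) ω = v r then g h.choose else 0
    with hG
  set t0 : Fin T := ⟨t, htT⟩ with ht0
  have hGdep : ∀ v v' : ∀ r : Fin T, Wn ((r : ℕ) + 1),
      (∀ r : Fin T, t < (r : ℕ) → v r = v' r) → G v = G v' := by
    intro v v' hvv
    have hiff : (∃ ω : Ω, ∀ r : Fin T, t < (r : ℕ) → Wp ((r : ℕ) + 1) ω = v r)
        ↔ (∃ ω : Ω, ∀ r : Fin T, t < (r : ℕ) → Wp ((r : ℕ) + 1) ω = v' r) := by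
      constructor
      · rintro ⟨ω, hω⟩; exact ⟨ω, fun r hr => (hω r hr).trans (hvv r hr)⟩
      · rintro ⟨ω, hω⟩; exact ⟨ω, fun r hr => (hω r hr).trans (hvv r hr).symm⟩
    by_cases h : ∃ ω : Ω, ∀ r : Fin T, t < (r : ℕ) → Wp ((r : ℕ) + 1) ω = v r
    · have h' := hiff.mp h
      simp only [hG]
      rw [dif_pos h, dif_pos h']
      apply hg
      intro r hr hrT
      obtain ⟨k, rfl⟩ : ∃ k, r = k + 1 := ⟨r - 1, by omega⟩
      have hk : k < T := by omega
      have htk : t < ((⟨k, hk⟩ : Fin T) : ℕ) := by simpa using by omega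
      have h1 := h.choose_spec ⟨k, hk⟩ htk
      have h2 := h'.choose_spec ⟨k, hk⟩ htk
      have h3 := hvv ⟨k, hk⟩ htk
      exact h1.trans (h3.trans h2.symm)
    · simp only [hG]
      rw [dif_neg h, dif_neg (fun h' => h (hiff.mpr h'))]
  have hcell : ∀ (ω : Ω) (v : ∀ r : Fin T, Wn ((r : ℕ) + 1)), ext ω = v → g ω = G v := by
    intro ω v hωv
    have h : ∃ ω' : Ω, ∀ r : Fin T, t < (r : ℕ) → Wp ((r : ℕ) + 1) ω' = v r :=
      ⟨ω, fun r _ => congrFun hωv r⟩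
    simp only [hG]
    rw [dif_pos h]
    apply hg
    intro r hr hrT
    obtain ⟨k, rfl⟩ : ∃ k, r = k + 1 := ⟨r - 1, by omega⟩
    have hk : k < T := by omega
    have htk : t < ((⟨k, hk⟩ : Fin T) : ℕ) := by simpa using by omega
    have h1 := h.choose_spec ⟨k, hk⟩ htk
    have h2 : Wp (k + 1) ω = v ⟨k, hk⟩ := congrFun hωv ⟨k, hk⟩
    exact h2.trans h1.symm
  have hcellsum : ∀ v : ∀ r : Fin T, Wn ((r : ℕ) + 1),
      ∑ ω : Ω, (if ext ω = v then g ω * P ω else 0)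
        = G v * ∏ r : Fin T, margin P Wp ((r : ℕ) + 1) (v r) := by
    intro v
    rw [show (∏ r : Fin T, margin P Wp ((r : ℕ) + 1) (v r))
        = ∑ ω : Ω, if ext ω = v then P ω else 0 from (cell_measure P Wp T hind v).symm,
      Finset.mul_sum]
    refine Finset.sum_congr rfl fun ω _ => ?_
    by_cases h : ext ω = v
    · rw [if_pos h, if_pos h, hcell ω v h]
    · rw [if_neg h, if_neg h, mul_zero]
  have hsecond : ∑ ω : Ω, g ω * P ω
      = ∑ v : ∀ r : Fin T, Wn ((r : ℕ) + 1), G v * ∏ r : Fin T, margin P Wp ((r : ℕ) + 1) (v r) := by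
    rw [fiber_sum ext (fun ω => g ω * P ω)]
    exact Finset.sum_congr rfl fun v _ => hcellsum v
  have hfirst : (∑ ω : Ω, if Wp (t + 1) ω = w then g ω * P ω else 0)
      = ∑ v : ∀ r : Fin T, Wn ((r : ℕ) + 1),
          (if v t0 = w then G v * ∏ r : Fin T, margin P Wp ((r : ℕ) + 1) (v r) else 0) := by
    rw [fiber_sum ext (fun ω => if Wp (t + 1) ω = w then g ω * P ω else 0)]
    refine Finset.sum_congr rfl fun v _ => ?_
    by_cases hvw : v t0 = w
    · rw [if_pos hvw, ← hcellsum v]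
      refine Finset.sum_congr rfl fun ω _ => ?_
      by_cases h : ext ω = v
      · have h2 : Wp (t + 1) ω = w := (congrFun h t0).trans hvw
        rw [if_pos h, if_pos h2, if_pos h]
      · rw [if_neg h, if_neg h]
    · rw [if_neg hvw]
      refine Finset.sum_eq_zero fun ω _ => ?_
      by_cases h : ext ω = v
      · have h2 : Wp (t + 1) ω ≠ w := fun hc => hvw ((congrFun h t0).symm.trans hc)
        rw [if_pos h, if_neg h2]
      · rw [if_neg h]
  rw [hfirst, hsecond]
  exact sum_pi_ite (fun r : Fin T => margin P Wp ((r : ℕ) + 1)) G t0 w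
    (by rw [margin_sum P Wp, hP])
    (by
      intro v a
      apply hGdep
      intro r hr
      have hne : r ≠ t0 := by
        intro hrt0
        rw [hrt0] at hr
        simp only [ht0] at hr
        omega
      exact Function.update_of_ne (β := fun r : Fin T => Wn ((r : ℕ) + 1)) hne a v)

end Indep

theorem exists_min_of_finite_range {ι : Type} [Nonempty ι] (F : ι → ℝ≥0∞)
    (h : (Set.range F).Finite) : ∃ i, F i = ⨅ j, F j := by
  have hm := Set.Nonempty.csInf_mem (Set.range_nonempty F) h
  rwa [sInf_range] at hm

section Main
variable {Wn U X : ℕ → Type}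
    [∀ s, Fintype (Wn s)] [∀ s, Nonempty (Wn s)]
    [∀ s, Fintype (U s)] [∀ s, Nonempty (U s)] [∀ s, Fintype (X s)]
    {Ω : Type} [Fintype Ω] [Nonempty Ω]

theorem Vtil_succ (P : Ω → ℝ≥0∞) (Wp : ∀ s, Ω → Wn s)
    (f : ∀ s, X s → U s → Wn (s + 1) → X (s + 1)) (n t : ℕ)
    (K : X (t + (n + 1)) → ℝ≥0∞) (x : X t) (e1 : t + 1 + n = t + (n + 1)) :
    Vtil P Wp f (n + 1) t K x
      = ⨅ u : U t, ∑ ω : Ω,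
          Vtil P Wp f n (t + 1) (fun x' => K (xcast e1 x'))
            (f t x u (Wp (t + 1) ω)) * P ω := by
  rw [Vtil]
  exact iInf_congr fun u => tsum_fintype _

theorem adapted_nonempty (Wp : ∀ s, Ω → Wn s) (t : ℕ) :
    Nonempty {Up : ∀ s, Ω → U s //
      ∀ (s : ℕ) (ω ω' : Ω),
        (∀ r, t < r → r ≤ s → Wp r ω = Wp r ω') → Up s ω = Up s ω'} :=
  ⟨⟨fun s _ => Classical.arbitrary _, fun _ _ _ _ => rfl⟩⟩

theorem cost_dec (P : Ω → ℝ≥0∞) (hP : ∑ ω : Ω, P ω = 1)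
    (Wp : ∀ s, Ω → Wn s) (T : ℕ)
    (hind : ∀ w : ∀ s, Wn s,
      (∑ ω : Ω, if (∀ s, 1 ≤ s → s ≤ T → Wp s ω = w s) then P ω else 0)
        = ∏ s ∈ Finset.Icc 1 T, margin P Wp s (w s))
    (f : ∀ s, X s → U s → Wn (s + 1) → X (s + 1)) (jt : X T → ℝ≥0∞)
    (n t : ℕ) (e : t + (n + 1) = T) (e1 : t + 1 + n = T) (x : X t)
    (Up : ∀ s, Ω → U s) (u0 : U t) (hu0 : ∀ ω, Up t ω = u0)
    (V : Wn (t + 1) → ∀ s, Ω → U s)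
    (hVad : ∀ w s ω ω', (∀ r, t + 1 < r → r ≤ s → Wp r ω = Wp r ω') → V w s ω = V w s ω')
    (hagree : ∀ w ω, Wp (t + 1) ω = w → ∀ s, t < s → V w s ω = Up s ω) :
    ∑ ω : Ω, jt (xcast e (traj f Up Wp (n + 1) t x ω)) * P ω
      = ∑ w : Wn (t + 1), margin P Wp (t + 1) w
          * ∑ ω : Ω, jt (xcast e1 (traj f (V w) Wp n (t + 1) (f t x u0 w) ω)) * P ω := by
  have htT : t < T := by omega
  have step1 : ∀ ω : Ω, jt (xcast e (traj f Up Wp (n + 1) t x ω))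
      = jt (xcast e1 (traj f Up Wp n (t + 1) (f t x u0 (Wp (t + 1) ω)) ω)) := by
    intro ω
    rw [traj_shift f Up Wp n t x ω, xcast_xcast, hu0 ω]
  rw [Finset.sum_congr rfl fun ω _ => by rw [step1 ω]]
  rw [fiber_sum (Wp (t + 1))
    (fun ω => jt (xcast e1 (traj f Up Wp n (t + 1) (f t x u0 (Wp (t + 1) ω)) ω)) * P ω)]
  refine Finset.sum_congr rfl fun w _ => ?_
  have step3 : ∀ ω : Ω,
      (if Wp (t + 1) ω = w
        then jt (xcast e1 (traj f Up Wp n (t + 1) (f t x u0 (Wp (t + 1) ω)) ω)) * P ω else 0)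
      = (if Wp (t + 1) ω = w
        then jt (xcast e1 (traj f (V w) Wp n (t + 1) (f t x u0 w) ω)) * P ω else 0) := by
    intro ω
    by_cases h : Wp (t + 1) ω = w
    · rw [if_pos h, if_pos h, h,
        traj_congr_ctrl f Up (V w) Wp n (t + 1) (f t x u0 w) ω
          (fun s hs _ => (hagree w ω h s (by omega)).symm)]
    · rw [if_neg h, if_neg h]
  rw [Finset.sum_congr rfl fun ω _ => step3 ω]
  exact indep_split P Wp T hP hind t htT
    (fun ω => jt (xcast e1 (traj f (V w) Wp n (t + 1) (f t x u0 w) ω)))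
    (fun ω ω' hh => by
      show jt (xcast e1 (traj f (V w) Wp n (t + 1) (f t x u0 w) ω))
        = jt (xcast e1 (traj f (V w) Wp n (t + 1) (f t x u0 w) ω'))
      rw [traj_meas f (V w) Wp (t + 1) (hVad w) n (t + 1) le_rfl (f t x u0 w) ω ω'
        (fun r hr hr' => hh r hr (by omega))])
    w

end Main

/-- dynamic programming with unit time blocks and independent noises (finite
state case). With `W_1,…,W_T` mutually independent (their joint probability mass function
factorizes), `Ṽ_T = j̃` and `Ṽ_t(x) = inf_u E[Ṽ_{t+1}(f_t(x,u,W_{t+1}))]`, the value `Ṽ_t(x_t)`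
equals the infimum over adapted control processes (`σ(U_s) ⊆ σ(W_{t+1},…,W_s)`) of
`E[ j̃(X_T) ]` with `X_t = x_t`, `X_{s+1} = f_s(X_s, U_s, W_{s+1})`. -/
theorem unit_block_dp_independent {Wn U X : ℕ → Type}
    [∀ s, Fintype (Wn s)] [∀ s, Nonempty (Wn s)]
    [∀ s, Fintype (U s)] [∀ s, Nonempty (U s)] [∀ s, Fintype (X s)]
    {Ω : Type} [Fintype Ω] [Nonempty Ω]
    (P : Ω → ℝ≥0∞) (hP : ∑' ω : Ω, P ω = 1)
    (Wp : ∀ s, Ω → Wn s) (T : ℕ)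
    (hind : ∀ w : ∀ s, Wn s,
      (∑' ω : Ω, if (∀ s, 1 ≤ s → s ≤ T → Wp s ω = w s) then P ω else 0)
        = ∏ s ∈ Finset.Icc 1 T, ∑' ω : Ω, if Wp s ω = w s then P ω else 0)
    (f : ∀ s, X s → U s → Wn (s + 1) → X (s + 1))
    (jt : X T → ℝ≥0∞)
    (n t : ℕ) (e : t + n = T) (x : X t) :
    Vtil P Wp f n t (fun x' => jt (xcast e x')) x
      = ⨅ Up : {Up : ∀ s, Ω → U s //
            ∀ (s : ℕ) (ω ω' : Ω),
              (∀ r, t < r → r ≤ s → Wp r ω = Wp r ω') → Up s ω = Up s ω'},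
          ∑' ω : Ω, jt (xcast e (traj f Up.1 Wp n t x ω)) * P ω := by
  have hPs : ∑ ω : Ω, P ω = 1 := by rw [← tsum_fintype (L := .unconditional _)]; exact hP
  have hinds : ∀ w : ∀ s, Wn s,
      (∑ ω : Ω, if (∀ s, 1 ≤ s → s ≤ T → Wp s ω = w s) then P ω else 0)
        = ∏ s ∈ Finset.Icc 1 T, margin P Wp s (w s) := by
    intro w
    rw [← tsum_fintype (L := .unconditional _), hind w]
    exact Finset.prod_congr rfl fun s _ => tsum_fintype _
  induction n generalizing t x with
  | zero =>
    have h0 : Vtil P Wp f 0 t (fun x' => jt (xcast e x')) x = jt (xcast e x) := rfl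
    rw [h0]
    haveI := adapted_nonempty (U := U) Wp t
    symm
    calc (⨅ Up : {Up : ∀ s, Ω → U s //
            ∀ (s : ℕ) (ω ω' : Ω),
              (∀ r, t < r → r ≤ s → Wp r ω = Wp r ω') → Up s ω = Up s ω'},
          ∑' ω : Ω, jt (xcast e (traj f Up.1 Wp 0 t x ω)) * P ω)
        = ⨅ _Up : {Up : ∀ s, Ω → U s //
            ∀ (s : ℕ) (ω ω' : Ω),
              (∀ r, t < r → r ≤ s → Wp r ω = Wp r ω') → Up s ω = Up s ω'},
            jt (xcast e x) := by
          refine iInf_congr fun Up => ?_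
          calc ∑' ω : Ω, jt (xcast e (traj f Up.1 Wp 0 t x ω)) * P ω
              = ∑' ω : Ω, jt (xcast e x) * P ω := rfl
            _ = jt (xcast e x) * ∑' ω : Ω, P ω := ENNReal.tsum_mul_left
            _ = jt (xcast e x) := by rw [hP, mul_one]
      _ = jt (xcast e x) := iInf_const
  | succ n ih =>
    have e1 : t + 1 + n = T := by omega
    have htT : t < T := by omega
    have hKK : (fun x' : X (t + 1 + n) =>
          jt (xcast e (xcast (show t + 1 + n = t + (n + 1) by omega) x')))
        = (fun x' : X (t + 1 + n) => jt (xcast e1 x')) := by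
      funext x'
      rw [xcast_xcast]
    have hunf : Vtil P Wp f (n + 1) t (fun x' => jt (xcast e x')) x
        = ⨅ u : U t, ∑ ω : Ω,
            Vtil P Wp f n (t + 1) (fun x' => jt (xcast e1 x'))
              (f t x u (Wp (t + 1) ω)) * P ω := by
      rw [Vtil_succ P Wp f n t (fun x' => jt (xcast e x')) x
        (show t + 1 + n = t + (n + 1) by omega), hKK]
    rw [hunf]
    apply le_antisymm
    · refine le_iInf fun Upp => ?_
      obtain ⟨Up, hUp⟩ := Upp
      show _ ≤ ∑' ω : Ω, jt (xcast e (traj f Up Wp (n + 1) t x ω)) * P ω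
      have hu0 : ∀ ω, Up t ω = Up t (Classical.arbitrary Ω) :=
        fun ω => hUp t ω (Classical.arbitrary Ω)
          (fun r hr hrs => absurd (hr.trans_le hrs) (lt_irrefl t))
      set Φ : ∀ s : ℕ, (∀ r, Wn r) → U s := fun s c =>
        if h : ∃ ω : Ω, ∀ r, t < r → r ≤ s → Wp r ω = c r then Up s h.choose
        else Classical.arbitrary _ with hΦdef
      have hΦcong : ∀ (s : ℕ) (c c' : ∀ r, Wn r),
          (∀ r, t < r → r ≤ s → c r = c' r) → Φ s c = Φ s c' := by
        intro s c c' hcc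
        have hiff : (∃ ω : Ω, ∀ r, t < r → r ≤ s → Wp r ω = c r)
            ↔ (∃ ω : Ω, ∀ r, t < r → r ≤ s → Wp r ω = c' r) :=
          ⟨fun ⟨ω, hω⟩ => ⟨ω, fun r h1 h2 => (hω r h1 h2).trans (hcc r h1 h2)⟩,
           fun ⟨ω, hω⟩ => ⟨ω, fun r h1 h2 => (hω r h1 h2).trans (hcc r h1 h2).symm⟩⟩
        by_cases h : ∃ ω : Ω, ∀ r, t < r → r ≤ s → Wp r ω = c r
        · have h' := hiff.mp h
          simp only [hΦdef]
          rw [dif_pos h, dif_pos h']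
          exact hUp s _ _ (fun r h1 h2 => (h.choose_spec r h1 h2).trans
            ((hcc r h1 h2).trans (h'.choose_spec r h1 h2).symm))
        · simp only [hΦdef]
          rw [dif_neg h, dif_neg (fun h' => h (hiff.mpr h'))]
      have hΦW : ∀ (s : ℕ) (ω : Ω), Φ s (fun r => Wp r ω) = Up s ω := by
        intro s ω
        have h : ∃ ω' : Ω, ∀ r, t < r → r ≤ s → Wp r ω' = Wp r ω := ⟨ω, fun _ _ _ => rfl⟩
        simp only [hΦdef]
        rw [dif_pos h]
        exact hUp s _ ω h.choose_spec
      set V : Wn (t + 1) → ∀ s : ℕ, Ω → U s :=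
        fun w s ω => Φ s (Function.update (fun r => Wp r ω) (t + 1) w) with hVdef
      have hVad : ∀ w (s : ℕ) (ω ω' : Ω),
          (∀ r, t + 1 < r → r ≤ s → Wp r ω = Wp r ω') → V w s ω = V w s ω' := by
        intro w s ω ω' hww
        apply hΦcong
        intro r h1 h2
        by_cases hr1 : r = t + 1
        · subst hr1; rw [Function.update_self, Function.update_self]
        · rw [Function.update_of_ne hr1, Function.update_of_ne hr1]
          exact hww r (by omega) h2
      have hagree : ∀ w ω, Wp (t + 1) ω = w → ∀ s, t < s → V w s ω = Up s ω := by
        intro w ω hw s _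
        simp only [hVdef]
        rw [← hw, Function.update_eq_self, hΦW]
      have hcd := cost_dec P hPs Wp T hinds f jt n t e e1 x Up
        (Up t (Classical.arbitrary Ω)) hu0 V hVad hagree
      rw [tsum_fintype, hcd]
      calc (⨅ u : U t, ∑ ω : Ω, Vtil P Wp f n (t + 1) (fun x' => jt (xcast e1 x'))
              (f t x u (Wp (t + 1) ω)) * P ω)
          ≤ ∑ ω : Ω, Vtil P Wp f n (t + 1) (fun x' => jt (xcast e1 x'))
              (f t x (Up t (Classical.arbitrary Ω)) (Wp (t + 1) ω)) * P ω :=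
            iInf_le _ (Up t (Classical.arbitrary Ω))
        _ = ∑ w : Wn (t + 1), Vtil P Wp f n (t + 1) (fun x' => jt (xcast e1 x'))
              (f t x (Up t (Classical.arbitrary Ω)) w) * margin P Wp (t + 1) w :=
            sum_w P Wp (t + 1) (fun w => Vtil P Wp f n (t + 1)
              (fun x' => jt (xcast e1 x')) (f t x (Up t (Classical.arbitrary Ω)) w))
        _ ≤ ∑ w : Wn (t + 1), margin P Wp (t + 1) w
              * ∑ ω : Ω, jt (xcast e1 (traj f (V w) Wp n (t + 1)
                  (f t x (Up t (Classical.arbitrary Ω)) w) ω)) * P ω := by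
            refine Finset.sum_le_sum fun w _ => ?_
            rw [mul_comm]
            refine mul_le_mul_right ?_ _
            rw [ih (t + 1) e1 (f t x (Up t (Classical.arbitrary Ω)) w)]
            refine iInf_le_of_le ⟨V w, hVad w⟩ ?_
            exact le_of_eq (tsum_fintype _)
    · -- iInf over controls ≤ iInf over u
      haveI := adapted_nonempty (U := U) Wp (t + 1)
      obtain ⟨ustar, hustar⟩ := exists_eq_ciInf_of_finite
        (f := fun u : U t => ∑ ω : Ω, Vtil P Wp f n (t + 1) (fun x' => jt (xcast e1 x'))
          (f t x u (Wp (t + 1) ω)) * P ω)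
      have hex : ∀ y : X (t + 1), ∃ Vp : {Vp : ∀ s, Ω → U s //
            ∀ (s : ℕ) (ω ω' : Ω),
              (∀ r, t + 1 < r → r ≤ s → Wp r ω = Wp r ω') → Vp s ω = Vp s ω'},
          (∑' ω : Ω, jt (xcast e1 (traj f Vp.1 Wp n (t + 1) y ω)) * P ω)
            = Vtil P Wp f n (t + 1) (fun x' => jt (xcast e1 x')) y := by
        intro y
        have hfin : (Set.range (fun Vp : {Vp : ∀ s, Ω → U s //
            ∀ (s : ℕ) (ω ω' : Ω),
              (∀ r, t + 1 < r → r ≤ s → Wp r ω = Wp r ω') → Vp s ω = Vp s ω'} =>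
            ∑' ω : Ω, jt (xcast e1 (traj f Vp.1 Wp n (t + 1) y ω)) * P ω)).Finite := by
          refine Set.Finite.subset (Set.finite_range
            (fun m : (∀ s : Fin (t + 1 + n), Ω → U s) =>
              ∑' ω : Ω, jt (xcast e1 (traj f
                (fun s => if h : s < t + 1 + n then m ⟨s, h⟩ else fun _ => Classical.arbitrary _)
                Wp n (t + 1) y ω)) * P ω)) ?_
          rintro z ⟨Vp, rfl⟩
          refine ⟨fun s => Vp.1 s, ?_⟩
          refine tsum_congr fun ω => ?_
          have hc := traj_congr_ctrl f
            (fun s => if h : s < t + 1 + n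
              then (fun s' : Fin (t + 1 + n) => Vp.1 s') ⟨s, h⟩
              else fun _ => Classical.arbitrary _)
            Vp.1 Wp n (t + 1) y ω
            (fun s hs hs' => by
              show (if h : s < t + 1 + n
                then (fun s' : Fin (t + 1 + n) => Vp.1 s') ⟨s, h⟩
                else fun _ => Classical.arbitrary _) ω = Vp.1 s ω
              rw [dif_pos hs'])
          rw [hc]
        obtain ⟨Vp0, hVp0⟩ := exists_min_of_finite_range _ hfin
        exact ⟨Vp0, hVp0.trans (ih (t + 1) e1 y).symm⟩
      choose Vopt hVopt using hex
      set Upc : ∀ s : ℕ, Ω → U s := Function.update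
        (fun s (ω : Ω) => if t < s then (Vopt (f t x ustar (Wp (t + 1) ω))).1 s ω
          else Classical.arbitrary _) t (fun _ => ustar) with hUpcdef
      have hUpct : ∀ ω, Upc t ω = ustar := by
        intro ω
        rw [hUpcdef, Function.update_self]
      have hUpcs : ∀ (s : ℕ) (ω : Ω), t < s →
          Upc s ω = (Vopt (f t x ustar (Wp (t + 1) ω))).1 s ω := by
        intro s ω hs
        rw [hUpcdef, Function.update_of_ne (show s ≠ t by omega)]
        exact if_pos hs
      have hUpcad : ∀ (s : ℕ) (ω ω' : Ω),
          (∀ r, t < r → r ≤ s → Wp r ω = Wp r ω') → Upc s ω = Upc s ω' := by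
        intro s ω ω' h
        rcases eq_or_ne s t with hst | hst
        · subst hst
          rw [hUpcdef, Function.update_self]
        · by_cases hts : t < s
          · have hw : Wp (t + 1) ω = Wp (t + 1) ω' := h (t + 1) (by omega) (by omega)
            rw [hUpcs s ω hts, hUpcs s ω' hts, hw]
            exact (Vopt _).2 s ω ω' (fun r h1 h2 => h r (by omega) h2)
          · rw [hUpcdef, Function.update_of_ne hst]
            rw [if_neg hts, if_neg hts]
      have hagree2 : ∀ w ω, Wp (t + 1) ω = w → ∀ s, t < s →
          (Vopt (f t x ustar w)).1 s ω = Upc s ω := by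
        intro w ω hw s hs
        rw [hUpcs s ω hs, hw]
      refine iInf_le_of_le ⟨Upc, hUpcad⟩ ?_
      rw [tsum_fintype,
        cost_dec P hPs Wp T hinds f jt n t e e1 x Upc ustar hUpct
          (fun w => (Vopt (f t x ustar w)).1) (fun w => (Vopt (f t x ustar w)).2) hagree2]
      have hVopt' : ∀ y : X (t + 1),
          (∑ ω : Ω, jt (xcast e1 (traj f (Vopt y).1 Wp n (t + 1) y ω)) * P ω)
            = Vtil P Wp f n (t + 1) (fun x' => jt (xcast e1 x')) y :=
        fun y => (tsum_fintype _).symm.trans (hVopt y)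
      calc (∑ w : Wn (t + 1), margin P Wp (t + 1) w
              * ∑ ω : Ω, jt (xcast e1 (traj f (Vopt (f t x ustar w)).1 Wp n (t + 1)
                  (f t x ustar w) ω)) * P ω)
          = ∑ w : Wn (t + 1), Vtil P Wp f n (t + 1) (fun x' => jt (xcast e1 x'))
              (f t x ustar w) * margin P Wp (t + 1) w := by
            refine Finset.sum_congr rfl fun w _ => ?_
            rw [hVopt' (f t x ustar w), mul_comm]
        _ = ∑ ω : Ω, Vtil P Wp f n (t + 1) (fun x' => jt (xcast e1 x'))
              (f t x ustar (Wp (t + 1) ω)) * P ω := (sum_w P Wp (t + 1)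
                (fun w => Vtil P Wp f n (t + 1) (fun x' => jt (xcast e1 x'))
                  (f t x ustar w))).symm
        _ = ⨅ u : U t, ∑ ω : Ω, Vtil P Wp f n (t + 1) (fun x' => jt (xcast e1 x'))
              (f t x u (Wp (t + 1) ω)) * P ω := hustar
        _ ≤ ⨅ u : U t, ∑ ω : Ω, Vtil P Wp f n (t + 1) (fun x' => jt (xcast e1 x'))
              (f t x u (Wp (t + 1) ω)) * P ω := le_rfl
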